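/- Let G be a finite Camina group. Then: (1) for every normal subgroup N of G, either N ≤ G' or G' ≤ N; and (2) for every normal subgroup N of G with N strictly contained in G', the quotient group G/N is also a Camina group. -/

import Mathlib

open scoped Classical Pointwise
open scoped commutatorElement

/-- The conjugacy class of `x` in `G`. -/
def conjClass {G : Type*} [Group G] (x : G) : Set G := {y | ∃ g : G, g * x * g⁻¹ = y}

/-- The adjacency matrix of a subset `C` of `G`. -/
noncomputable def adjMat (G : Type*) [Group G] (C : Set G) : Matrix G G ℂ :=
  Matrix.of fun x y => if y * x⁻¹ ∈ C then (1 : ℂ) else 0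

/-- The dual idempotent of a subset `C` of `G` (base point the identity). -/
noncomputable def dualIdem (G : Type*) [Group G] (C : Set G) : Matrix G G ℂ :=
  Matrix.of fun x y => if x = y ∧ y ∈ C then (1 : ℂ) else 0

/-- The Terwilliger algebra of the group association scheme of `G`, with base point `e`. -/
noncomputable def TerwAlg (G : Type*) [Group G] [Fintype G] [DecidableEq G] : Subalgebra ℂ (Matrix G G ℂ) :=
  Algebra.adjoin ℂ
    ((Set.range fun x : G => adjMat G (conjClass x)) ∪
     (Set.range fun x : G => dualIdem G (conjClass x)))

/-- A Camina group: a nonabelian group in which every conjugacy class outside the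
commutator subgroup is a coset of the commutator subgroup. -/
def IsCamina (G : Type*) [Group G] : Prop :=
  (¬ ∀ a b : G, a * b = b * a) ∧
  ∀ x : G, x ∉ commutator G → conjClass x = x • (commutator G : Set G)

/-- The action of the unit group of a field on (the multiplicative version of) its
additive group, by multiplication. -/
noncomputable def frobAct (F : Type*) [Field F] : Fˣ →* MulAut (Multiplicative F) where
  toFun u := AddEquiv.toMultiplicative (DistribMulAction.toAddAut Fˣ F u)
  map_one' := by ext x; rw [map_one]; rfl
  map_mul' u v := by ext x; rw [map_mul]; rfl


/-- The Frobenius group `F ⋊ Fˣ` for `F` the field with `p ^ r` elements. -/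
abbrev FrobGrp (p r : ℕ) [Fact p.Prime] : Type :=
  Multiplicative (GaloisField p r) ⋊[frobAct (GaloisField p r)] (GaloisField p r)ˣ

/-- Lewis, Lemma 2.3: in a Camina group every normal subgroup is comparable with the
commutator subgroup, and quotients by normal subgroups strictly inside `G'` are Camina. -/
theorem stmt14 {G : Type*} [Group G] [Finite G] (hcam : IsCamina G) :
    (∀ N : Subgroup G, N.Normal → N ≤ commutator G ∨ commutator G ≤ N) ∧
    (∀ (N : Subgroup G) [N.Normal], N < commutator G → IsCamina (G ⧸ N)) := by
  obtain ⟨hna, hcl⟩ := hcam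
  constructor
  · intro N hN
    by_cases h : N ≤ commutator G
    · exact Or.inl h
    · right
      obtain ⟨n, hnN, hn'⟩ := SetLike.not_le_iff_exists.mp h
      intro c hc
      have h1 : n * c ∈ conjClass n := by
        rw [hcl n hn']
        exact ⟨c, hc, rfl⟩
      obtain ⟨g, hg⟩ := h1
      have hmem : n * c ∈ N := hg ▸ hN.conj_mem n hnN g
      simpa using N.mul_mem (N.inv_mem hnN) hmem
  · intro N _ hNlt
    have hmap : commutator (G ⧸ N) = (commutator G).map (QuotientGroup.mk' N) := by
      rw [commutator_def, commutator_def, Subgroup.map_commutator,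
        Subgroup.map_top_of_surjective _ (QuotientGroup.mk'_surjective N)]
    constructor
    · intro hab
      have hle : commutator G ≤ N := by
        rw [commutator_def, Subgroup.commutator_le]
        intro g1 _ g2 _
        have h := hab ((g1 : G) : G ⧸ N) ((g2 : G) : G ⧸ N)
        have : ((⁅g1, g2⁆ : G) : G ⧸ N) = 1 := by
          have heq : ((⁅g1, g2⁆ : G) : G ⧸ N) = ⁅((g1 : G) : G ⧸ N), ((g2 : G) : G ⧸ N)⁆ := by
            simp [commutatorElement_def]
          rw [heq, commutatorElement_eq_one_iff_mul_comm]
          exact h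
        exact (QuotientGroup.eq_one_iff _).mp this
      exact absurd (hNlt.trans_le hle) (lt_irrefl _)
    · intro y hy
      obtain ⟨x, rfl⟩ := QuotientGroup.mk_surjective y
      have hx : x ∉ commutator G := by
        intro hx
        exact hy (hmap ▸ ⟨x, hx, rfl⟩)
      ext z
      constructor
      · rintro ⟨g, rfl⟩
        obtain ⟨g, rfl⟩ := QuotientGroup.mk_surjective g
        have h1 : g * x * g⁻¹ ∈ conjClass x := ⟨g, rfl⟩
        rw [hcl x hx] at h1
        obtain ⟨c, hc, hceq⟩ := h1
        refine ⟨(c : G ⧸ N), hmap ▸ ⟨c, hc, rfl⟩, ?_⟩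
        simpa [smul_eq_mul, QuotientGroup.mk_mul, QuotientGroup.mk_inv] using
          congrArg (QuotientGroup.mk (s := N)) hceq
      · rintro ⟨d, hd, rfl⟩
        rw [hmap] at hd
        obtain ⟨c, hc, rfl⟩ := hd
        have h1 : x * c ∈ conjClass x := by
          rw [hcl x hx]
          exact ⟨c, hc, rfl⟩
        obtain ⟨g, hg⟩ := h1
        refine ⟨(g : G ⧸ N), ?_⟩
        have := congrArg (QuotientGroup.mk (s := N)) hg
        simpa [smul_eq_mul, QuotientGroup.mk_mul, QuotientGroup.mk_inv] using this
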